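/- arXiv:2012.07914 — 3 statements merged into one kernel-verified Lean document; each statement's English description precedes it below -/
import Mathlib

section
/- Let A ⊆ ℝ[x₁,…,x_n] be a subalgebra containing r² = x₁²+⋯+x_n² and preserved by the Laplacian Δ = Σ ∂²/∂xᵢ². Then A is graded: A = ⊕_d (A ∩ ℝ[V]_d), where ℝ[V]_d is the space of homogeneous polynomials of degree d. -/
open MvPolynomial

/-- The Laplacian Δ = Σᵢ ∂²/∂xᵢ². -/
noncomputable def lap {n : ℕ} (f : MvPolynomial (Fin n) ℝ) : MvPolynomial (Fin n) ℝ :=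
  ∑ i, pderiv i (pderiv i f)

/-- ⟨∇f, ∇g⟩ = Σᵢ (∂f/∂xᵢ)(∂g/∂xᵢ). -/
noncomputable def gradInner {n : ℕ} (f g : MvPolynomial (Fin n) ℝ) :
    MvPolynomial (Fin n) ℝ :=
  ∑ i, pderiv i f * pderiv i g

/-- r² = x₁² + ⋯ + xₙ². -/
noncomputable def rsq {n : ℕ} : MvPolynomial (Fin n) ℝ := ∑ i, X i ^ 2

/-- The Euler operator E = Σᵢ xᵢ ∂/∂xᵢ. -/
noncomputable def eul {n : ℕ} (f : MvPolynomial (Fin n) ℝ) : MvPolynomial (Fin n) ℝ :=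
  ∑ i, X i * pderiv i f

lemma pderiv_rsq {n : ℕ} (i : Fin n) : pderiv i (rsq (n := n)) = C 2 * X i := by
  rw [rsq, map_sum]
  rw [Finset.sum_eq_single i]
  · rw [pderiv_pow]; simp [map_ofNat]
  · intro j _ hj; simp [pderiv_pow, pderiv_X_of_ne hj]
  · simp

lemma eul_monomial {n : ℕ} (m : Fin n →₀ ℕ) (c : ℝ) :
    eul (monomial m c) = (m.degree : ℝ) • monomial m c := by
  have hX : ∀ i : Fin n, (X i : MvPolynomial (Fin n) ℝ) = monomial (Finsupp.single i 1) 1 :=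
    fun _ => rfl
  have hterm : ∀ i : Fin n, X i * pderiv i (monomial m c) = (m i : ℝ) • monomial m c := by
    intro i
    rw [pderiv_monomial, hX, monomial_mul, one_mul, smul_monomial]
    by_cases h : m i = 0
    · simp [h]
    · have hle : Finsupp.single i 1 ≤ m :=
        Finsupp.single_le_iff.mpr (Nat.one_le_iff_ne_zero.mpr h)
      rw [add_tsub_cancel_of_le hle, smul_eq_mul, mul_comm]
  rw [eul]
  simp_rw [hterm, ← Finset.sum_smul]
  congr 1
  rw [Finsupp.degree_apply]
  push_cast
  exact (Finset.sum_subset (Finset.subset_univ _)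
    (by simp +contextual [Finsupp.notMem_support_iff])).symm

lemma eul_add {n : ℕ} (f g : MvPolynomial (Fin n) ℝ) : eul (f + g) = eul f + eul g := by
  simp [eul, mul_add, Finset.sum_add_distrib]

/-- The Euler operator acts as multiplication by `d` on degree-`d` components. -/
lemma hc_eul {n : ℕ} (d : ℕ) (f : MvPolynomial (Fin n) ℝ) :
    homogeneousComponent d (eul f) = (d : ℝ) • homogeneousComponent d f := by
  induction f using MvPolynomial.induction_on' with
  | monomial m c =>
    rw [eul_monomial, map_smul]
    by_cases h : m.degree = d
    · rw [h]
    · rw [homogeneousComponent_eq_zero' _ _ ?_, smul_zero, smul_zero]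
      intro m' hm'
      rw [mem_support_iff, coeff_monomial] at hm'
      by_cases hmm : m = m'
      · subst hmm; exact h
      · simp [hmm] at hm'
  | add p q hp hq => rw [eul_add, map_add, map_add, hp, hq, smul_add]

/-- Δ(r²·f) = 2n·f + 4·E f + r²·Δf. -/
lemma lap_rsq_mul {n : ℕ} (f : MvPolynomial (Fin n) ℝ) :
    lap (rsq * f) = (n : MvPolynomial (Fin n) ℝ) * (C 2 * f) + C 4 * eul f + rsq * lap f := by
  have key : ∀ i : Fin n, pderiv i (pderiv i (rsq * f)) =
      C 2 * f + C 4 * (X i * pderiv i f) + rsq * pderiv i (pderiv i f) := by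
    intro i
    have h4 : (C 4 : MvPolynomial (Fin n) ℝ) = C 2 + C 2 := by rw [← C_add]; norm_num
    simp only [pderiv_mul, pderiv_rsq, pderiv_C, pderiv_X_self, map_add, h4]
    ring
  rw [lap]
  simp_rw [key, Finset.sum_add_distrib, ← Finset.mul_sum]
  rw [← eul, ← lap]
  congr 1
  congr 1
  rw [Finset.sum_const, nsmul_eq_mul, Finset.card_univ, Fintype.card_fin]
  ring

/-- A Laplacian subalgebra is preserved by the Euler operator. -/
lemma eul_mem {n : ℕ} (A : Subalgebra ℝ (MvPolynomial (Fin n) ℝ))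
    (hr : rsq ∈ A) (hΔ : ∀ f ∈ A, lap f ∈ A) {f : MvPolynomial (Fin n) ℝ} (hf : f ∈ A) :
    eul f ∈ A := by
  have h1 : C 4 * eul f =
      lap (rsq * f) - (n : MvPolynomial (Fin n) ℝ) * (C 2 * f) - rsq * lap f := by
    rw [lap_rsq_mul]; ring
  have h2 : C 4 * eul f ∈ A := by
    rw [h1]
    exact A.sub_mem (A.sub_mem (hΔ _ (A.mul_mem hr hf))
      (A.mul_mem (A.natCast_mem n) (A.mul_mem (A.algebraMap_mem 2) hf)))
      (A.mul_mem hr (hΔ f hf))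
  have h3 : eul f = (4 : ℝ)⁻¹ • (C 4 * eul f) := by
    rw [smul_eq_C_mul, ← mul_assoc, ← C_mul]
    norm_num
  rw [h3]
  exact A.smul_mem h2 _

/-- A Laplacian subalgebra (containing r² and preserved by Δ) is graded:
it contains every homogeneous component of each of its elements. -/
theorem laplacian_algebra_graded {n : ℕ}
    (A : Subalgebra ℝ (MvPolynomial (Fin n) ℝ))
    (hr : rsq ∈ A) (hΔ : ∀ f ∈ A, lap f ∈ A) :
    ∀ f ∈ A, ∀ d : ℕ, homogeneousComponent d f ∈ A := by
  have key : ∀ N : ℕ, ∀ f ∈ A, f.totalDegree ≤ N → ∀ d : ℕ, homogeneousComponent d f ∈ A := by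
    intro N
    induction N with
    | zero =>
      intro f hf h0 d
      rw [Nat.le_zero] at h0
      match d with
      | 0 =>
        have hs := sum_homogeneousComponent f
        rw [h0, Finset.sum_range_one] at hs
        rw [hs]; exact hf
      | (d + 1) =>
        rw [homogeneousComponent_eq_zero _ _ (by omega)]
        exact A.zero_mem
    | succ N ih =>
      intro f hf hdeg d
      set g := eul f - ((N + 1 : ℕ) : ℝ) • f with hgdef
      have hg : g ∈ A := A.sub_mem (eul_mem A hr hΔ hf) (A.smul_mem hf _)
      have hcg : ∀ e : ℕ, homogeneousComponent e g =
          ((e : ℝ) - ((N + 1 : ℕ) : ℝ)) • homogeneousComponent e f := by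
        intro e
        rw [hgdef, map_sub, map_smul, hc_eul, sub_smul]
      have hcgz : ∀ e : ℕ, N + 1 ≤ e → homogeneousComponent e g = 0 := by
        intro e he
        rcases eq_or_lt_of_le he with heq | hlt
        · rw [hcg, ← heq, sub_self, zero_smul]
        · rw [hcg, homogeneousComponent_eq_zero _ _ (lt_of_le_of_lt hdeg hlt), smul_zero]
      have hgdeg : g.totalDegree ≤ N := by
        rw [totalDegree]
        apply Finset.sup_le
        intro m hm
        by_contra hgt
        push_neg at hgt
        have hdm : (m.sum fun _ e => e) = m.degree := rfl
        have hz : homogeneousComponent m.degree g = 0 := hcgz _ (by omega)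
        have := coeff_homogeneousComponent (σ := Fin n) (R := ℝ) m.degree g m
        rw [hz, if_pos rfl] at this
        simp only [coeff_zero] at this
        exact (mem_support_iff.mp hm) this.symm
      have hA : ∀ e : ℕ, e < N + 1 → homogeneousComponent e f ∈ A := by
        intro e he
        have hne : (e : ℝ) - ((N + 1 : ℕ) : ℝ) ≠ 0 := by
          rw [sub_ne_zero]
          exact_mod_cast Nat.ne_of_lt he
        have : homogeneousComponent e f =
            ((e : ℝ) - ((N + 1 : ℕ) : ℝ))⁻¹ • homogeneousComponent e g := by
          rw [hcg, smul_smul, inv_mul_cancel₀ hne, one_smul]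
        rw [this]
        exact A.smul_mem (ih g hg hgdeg e) _
      by_cases hd : d < N + 1
      · exact hA d hd
      · push_neg at hd
        rcases eq_or_lt_of_le hd with heq | hlt
        · have hsum : ∑ e ∈ Finset.range (N + 2), homogeneousComponent e f = f := by
            refine ((Finset.sum_subset
                (Finset.range_subset_range.mpr (show f.totalDegree + 1 ≤ N + 2 by omega))
                ?_).symm).trans (sum_homogeneousComponent f)
            intro e _ he
            rw [Finset.mem_range, not_lt] at he
            exact homogeneousComponent_eq_zero _ _ (by omega)
          rw [Finset.sum_range_succ] at hsum
          have : homogeneousComponent (N + 1) f =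
              f - ∑ e ∈ Finset.range (N + 1), homogeneousComponent e f :=
            eq_sub_of_add_eq' hsum
          rw [← heq, this]
          exact A.sub_mem hf (Subalgebra.sum_mem A fun e he =>
            hA e (Finset.mem_range.mp he))
        · rw [homogeneousComponent_eq_zero _ _ (lt_of_le_of_lt hdeg hlt)]
          exact A.zero_mem
  intro f hf d
  exact key f.totalDegree f hf le_rfl d
end

section
/- Let A ⊆ ℝ[V] be a graded subalgebra (i.e., closed under taking homogeneous components). Then the algebra B of all polynomials constant on every equivalence class of ∼_A is also graded, where x ∼_A y iff f(x) = f(y) for all f ∈ A. -/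
open MvPolynomial

lemma eval_mul_of_isHomogeneous {n : ℕ} {p : MvPolynomial (Fin n) ℝ} {d : ℕ}
    (hp : p.IsHomogeneous d) (t : ℝ) (x : Fin n → ℝ) :
    eval (fun i => t * x i) p = t ^ d * eval x p := by
  rw [eval_eq, eval_eq, Finset.mul_sum]
  apply Finset.sum_congr rfl
  intro m hm
  have hdeg : ∑ i ∈ m.support, m i = d := by
    have := hp (mem_support_iff.mp hm)
    simpa [Finsupp.weight, Finsupp.linearCombination, Finsupp.sum] using this
  calc coeff m p * ∏ i ∈ m.support, (t * x i) ^ m i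
      = coeff m p * ((∏ i ∈ m.support, t ^ m i) * ∏ i ∈ m.support, x i ^ m i) := by
        rw [← Finset.prod_mul_distrib]; simp [mul_pow]
    _ = t ^ d * (coeff m p * ∏ i ∈ m.support, x i ^ m i) := by
        rw [Finset.prod_pow_eq_pow_sum, hdeg]; ring

lemma eval_mul_eq_sum {n : ℕ} (p : MvPolynomial (Fin n) ℝ) (t : ℝ) (x : Fin n → ℝ) :
    eval (fun i => t * x i) p =
      ∑ d ∈ Finset.range (p.totalDegree + 1), t ^ d * eval x (homogeneousComponent d p) := by
  conv_lhs => rw [← sum_homogeneousComponent p]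
  rw [map_sum]
  exact Finset.sum_congr rfl fun d _ =>
    eval_mul_of_isHomogeneous (homogeneousComponent_isHomogeneous d p) t x

/-- If A is a graded subalgebra of ℝ[V], then the algebra of all polynomials
constant on every equivalence class of ∼_A is also graded. -/
theorem basic_of_graded_is_graded {n : ℕ}
    (A : Subalgebra ℝ (MvPolynomial (Fin n) ℝ))
    (hA : ∀ f ∈ A, ∀ d : ℕ, homogeneousComponent d f ∈ A)
    (f : MvPolynomial (Fin n) ℝ)
    (hf : ∀ x y : Fin n → ℝ, (∀ a ∈ A, eval x a = eval y a) →
      eval x f = eval y f) :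
    ∀ d : ℕ, ∀ x y : Fin n → ℝ, (∀ a ∈ A, eval x a = eval y a) →
      eval x (homogeneousComponent d f) = eval y (homogeneousComponent d f) := by
  intro d x y h
  -- scaled points are still equivalent
  have hsc : ∀ t : ℝ, ∀ a ∈ A, eval (fun i => t * x i) a = eval (fun i => t * y i) a := by
    intro t a ha
    rw [eval_mul_eq_sum, eval_mul_eq_sum]
    exact Finset.sum_congr rfl fun e _ => by rw [h _ (hA a ha e)]
  have hft : ∀ t : ℝ, eval (fun i => t * x i) f = eval (fun i => t * y i) f :=
    fun t => hf _ _ (hsc t)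
  -- compare as polynomials in t
  set N := f.totalDegree
  set P : Polynomial ℝ :=
    ∑ e ∈ Finset.range (N + 1), Polynomial.C (eval x (homogeneousComponent e f)) * Polynomial.X ^ e
  set Q : Polynomial ℝ :=
    ∑ e ∈ Finset.range (N + 1), Polynomial.C (eval y (homogeneousComponent e f)) * Polynomial.X ^ e
  have hPQ : P = Q := by
    apply Polynomial.funext
    intro t
    have := hft t
    rw [eval_mul_eq_sum, eval_mul_eq_sum] at this
    simp only [P, Q, Polynomial.eval_finset_sum, Polynomial.eval_mul, Polynomial.eval_C,
      Polynomial.eval_pow, Polynomial.eval_X]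
    calc ∑ e ∈ Finset.range (N + 1), eval x (homogeneousComponent e f) * t ^ e
        = ∑ e ∈ Finset.range (N + 1), t ^ e * eval x (homogeneousComponent e f) := by
          exact Finset.sum_congr rfl fun e _ => mul_comm _ _
      _ = ∑ e ∈ Finset.range (N + 1), t ^ e * eval y (homogeneousComponent e f) := this
      _ = ∑ e ∈ Finset.range (N + 1), eval y (homogeneousComponent e f) * t ^ e := by
          exact Finset.sum_congr rfl fun e _ => mul_comm _ _
  by_cases hd : d ≤ N
  · have := congrArg (fun p => Polynomial.coeff p d) hPQ
    simpa [P, Q, Polynomial.finset_sum_coeff, Polynomial.coeff_C_mul, Polynomial.coeff_X_pow,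
      Finset.sum_ite_eq', Finset.mem_range, Nat.lt_succ_iff, hd] using this
  · rw [homogeneousComponent_eq_zero _ _ (by omega)]; simp
end

section
/- The functions f_{ij}(v₁,…,v_k) = ⟨vᵢ,vⱼ⟩ separate the orbits of the diagonal action of O(n) on (ℝ^n)^k: if (v₁,…,v_k) and (w₁,…,w_k) satisfy ⟨vᵢ,vⱼ⟩ = ⟨wᵢ,wⱼ⟩ for all i,j, then there exists g ∈ O(n) with g·vᵢ = wᵢ for all i. -/
open Finset Module

/-- Separation part of Weyl's FFT for O(n): if two k-tuples of vectors in ℝⁿ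
have equal pairwise inner products, they differ by an orthogonal map. -/
theorem orthogonal_orbit_separation {n k : ℕ}
    (v w : Fin k → EuclideanSpace ℝ (Fin n))
    (h : ∀ i j, inner ℝ (v i) (v j) = (inner ℝ (w i) (w j) : ℝ)) :
    ∃ g : EuclideanSpace ℝ (Fin n) ≃ₗᵢ[ℝ] EuclideanSpace ℝ (Fin n),
      ∀ i, g (v i) = w i := by
  let T : (Fin k → ℝ) →ₗ[ℝ] EuclideanSpace ℝ (Fin n) := Fintype.linearCombination ℝ v
  let T' : (Fin k → ℝ) →ₗ[ℝ] EuclideanSpace ℝ (Fin n) := Fintype.linearCombination ℝ w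
  have key : ∀ c c' : Fin k → ℝ, (inner ℝ (T c) (T c') : ℝ) = inner ℝ (T' c) (T' c') := by
    intro c c'
    simp only [T, T', Fintype.linearCombination_apply, sum_inner, inner_sum,
      real_inner_smul_left, real_inner_smul_right]
    exact Finset.sum_congr rfl fun j _ => Finset.sum_congr rfl fun i _ => by rw [h]
  have hker : LinearMap.ker T ≤ LinearMap.ker T' := by
    intro c hc
    rw [LinearMap.mem_ker] at hc ⊢
    have := key c c
    rw [hc, inner_zero_left] at this
    exact (inner_self_eq_zero (𝕜 := ℝ)).mp this.symm
  let L0 := Submodule.liftQ _ T' hker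
  let e : ((Fin k → ℝ) ⧸ LinearMap.ker T) ≃ₗ[ℝ] LinearMap.range T := T.quotKerEquivRange
  let L1 : LinearMap.range T →ₗ[ℝ] EuclideanSpace ℝ (Fin n) := L0.comp (e.symm : _ →ₗ[ℝ] _)
  have hL1 : ∀ c : Fin k → ℝ, ∀ hm, L1 ⟨T c, hm⟩ = T' c := by
    intro c hm
    have he : e (Submodule.Quotient.mk c) = ⟨T c, hm⟩ := by
      apply Subtype.ext
      simp [e, LinearMap.quotKerEquivRange]
    simp only [L1, LinearMap.comp_apply]
    rw [← he, LinearEquiv.coe_coe, LinearEquiv.symm_apply_apply]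
    simp [L0]
  have hnorm : ∀ x : LinearMap.range T, ‖L1 x‖ = ‖x‖ := by
    rintro ⟨x, c, rfl⟩
    rw [hL1 c ⟨c, rfl⟩]
    have h1 := key c c
    rw [real_inner_self_eq_norm_sq, real_inner_self_eq_norm_sq] at h1
    have h2 : ‖T' c‖ = ‖T c‖ := by
      nlinarith [norm_nonneg (T c), norm_nonneg (T' c)]
    simpa using h2
  let L : LinearMap.range T →ₗᵢ[ℝ] EuclideanSpace ℝ (Fin n) := ⟨L1, hnorm⟩
  let G := L.extend
  have hGv : ∀ i, G (v i) = w i := by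
    intro i
    have hv : v i = T (Pi.single i 1) := by
      simp [T, Fintype.linearCombination_apply, Pi.single_apply]
    have hw : w i = T' (Pi.single i 1) := by
      simp [T', Fintype.linearCombination_apply, Pi.single_apply]
    have hm : v i ∈ LinearMap.range T := ⟨Pi.single i 1, hv.symm⟩
    have hext := L.extend_apply ⟨v i, hm⟩
    rw [show ((⟨v i, hm⟩ : LinearMap.range T) : EuclideanSpace ℝ (Fin n)) = v i from rfl] at hext
    rw [hext]
    show L1 ⟨v i, hm⟩ = w i
    have hsub : (⟨v i, hm⟩ : LinearMap.range T)
        = ⟨T (Pi.single i 1), LinearMap.mem_range_self T (Pi.single i 1)⟩ := Subtype.ext hv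
    rw [hsub, hL1, ← hw]
  exact ⟨G.toLinearIsometryEquiv rfl, hGv⟩
end
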